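/- Let G be a Polish group and let X denote the completion of G with respect to the Roelcke uniformity. Then G is locally Roelcke precompact if and only if X is locally compact. -/

import Mathlib

open scoped Pointwise

/-- A subset `A` of a topological group `G` is *Roelcke precompact* if for every
neighborhood `V` of the identity there is a finite set `F ⊆ G` with `A ⊆ V * F * V`,
where `V * F * V = {v * f * w : v, w ∈ V, f ∈ F}`. -/
def RoelckePrecompact {G : Type*} [Group G] [TopologicalSpace G] (A : Set G) : Prop :=
  ∀ V ∈ nhds (1 : G), ∃ F : Finset G, A ⊆ V * (F : Set G) * V

/-- A topological group is *locally Roelcke precompact* if some open neighborhood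
of the identity is Roelcke precompact. -/
def LocallyRoelckePrecompact (G : Type*) [Group G] [TopologicalSpace G] : Prop :=
  ∃ U : Set G, IsOpen U ∧ (1 : G) ∈ U ∧ RoelckePrecompact U

/-- The left uniformity of a topological group: the pullback under inversion of the
right uniformity `IsTopologicalGroup.rightUniformSpace G`; its basic entourages are the sets
`{(f,g) | f⁻¹ * g ∈ V}` for `V` a neighborhood of the identity. -/
noncomputable def leftUniformity (G : Type*) [Group G] [TopologicalSpace G]
    [IsTopologicalGroup G] : UniformSpace G :=
  UniformSpace.comap (fun g : G => g⁻¹) (IsTopologicalGroup.rightUniformSpace G)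

/-- The Roelcke uniformity: the meet of the left and right group uniformities, i.e. the
finest uniformity coarser than both.  (In Mathlib's order on `UniformSpace`, where finer
uniformities are smaller, this meet is the lattice join `⊔`.) -/
noncomputable def roelckeUniformity (G : Type*) [Group G] [TopologicalSpace G]
    [IsTopologicalGroup G] : UniformSpace G :=
  leftUniformity G ⊔ IsTopologicalGroup.rightUniformSpace G

/-- The Roelcke completion of a topological group: the completion of `G` with respect to
the Roelcke uniformity. -/
def RoelckeCompletion (G : Type*) [Group G] [TopologicalSpace G] [IsTopologicalGroup G] :
    Type _ :=
  @UniformSpace.Completion G (roelckeUniformity G)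

noncomputable instance RoelckeCompletion.instUniformSpace (G : Type*) [Group G]
    [TopologicalSpace G] [IsTopologicalGroup G] : UniformSpace (RoelckeCompletion G) :=
  @UniformSpace.Completion.uniformSpace G (roelckeUniformity G)

/-- The canonical map from `G` to its Roelcke completion. -/
noncomputable def toRoelckeCompletion (G : Type*) [Group G] [TopologicalSpace G]
    [IsTopologicalGroup G] : G → RoelckeCompletion G :=
  @UniformSpace.Completion.coe' G (roelckeUniformity G)

open Filter Set
open scoped Uniformity
open scoped SetRel

set_option linter.unusedSectionVars false

section RoelckeBasis

variable {G : Type*} [Group G] [TopologicalSpace G] [IsTopologicalGroup G]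

/-- Basic Roelcke entourage. -/
def rent (V : Set G) : Set (G × G) := {p : G × G | ∃ v ∈ V, ∃ w ∈ V, p.2 = v * p.1 * w}

theorem rent_mono {V W : Set G} (h : V ⊆ W) : rent V ⊆ rent W := by
  rintro p ⟨v, hv, w, hw, hp⟩
  exact ⟨v, h hv, w, h hw, hp⟩

theorem refl_mem_rent {V : Set G} (h1 : (1 : G) ∈ V) (x : G) : (x, x) ∈ rent V :=
  ⟨1, h1, 1, h1, by simp⟩

theorem rent_comp_subset {V W : Set G} (h : ∀ v ∈ V, ∀ w ∈ V, v * w ∈ W) :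
    rent V ○ rent V ⊆ rent W := by
  rintro p ⟨z, ⟨v, hv, w, hw, hz⟩, ⟨v', hv', w', hw', hy⟩⟩
  refine ⟨v' * v, h _ hv' _ hv, w * w', h _ hw _ hw', ?_⟩
  have hz' : z = v * p.1 * w := hz
  have hy' : p.2 = v' * z * w' := hy
  rw [hy', hz']; group

theorem inv_mem_nhds_one' {V : Set G} (hV : V ∈ nhds (1 : G)) : V⁻¹ ∈ nhds (1 : G) := by
  have : Filter.Tendsto (fun x : G => x⁻¹) (nhds 1) (nhds 1) := by
    simpa using (continuous_inv (G := G)).tendsto (1 : G)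
  exact inv_mem_nhds_one G hV

theorem conj_mem_nhds_one {V : Set G} (hV : V ∈ nhds (1 : G)) (g : G) :
    {x : G | g * x * g⁻¹ ∈ V} ∈ nhds (1 : G) := by
  have hc : Filter.Tendsto (fun x : G => g * x * g⁻¹) (nhds 1) (nhds 1) := by
    have hcont : Continuous (fun x : G => g * x * g⁻¹) := by continuity
    simpa using hcont.tendsto (1 : G)
  exact hc hV

theorem uniformity_right_eq :
    𝓤[IsTopologicalGroup.rightUniformSpace G]
      = Filter.comap (fun p : G × G => p.2 / p.1) (nhds (1 : G)) := by
  simp only [div_eq_mul_inv]; rfl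

theorem uniformity_left_eq :
    𝓤[leftUniformity G]
      = Filter.comap (fun p : G × G => p.2⁻¹ / p.1⁻¹) (nhds (1 : G)) := by
  show Filter.comap (fun p : G × G => ((fun g : G => g⁻¹) p.1, (fun g : G => g⁻¹) p.2))
      (Filter.comap (fun p : G × G => p.2 * p.1⁻¹) (nhds (1 : G))) = _
  rw [Filter.comap_comap]
  simp only [div_eq_mul_inv]; rfl

theorem rent_mem_right {V : Set G} (hV : V ∈ nhds (1 : G)) :
    rent V ∈ 𝓤[IsTopologicalGroup.rightUniformSpace G] := by
  rw [uniformity_right_eq]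
  refine Filter.mem_comap.2 ⟨V, hV, ?_⟩
  rintro p hp
  exact ⟨p.2 / p.1, hp, 1, mem_of_mem_nhds hV, by simp [div_eq_mul_inv, mul_assoc]⟩

theorem rent_mem_left {V : Set G} (hV : V ∈ nhds (1 : G)) :
    rent V ∈ 𝓤[leftUniformity G] := by
  rw [uniformity_left_eq]
  refine Filter.mem_comap.2 ⟨V⁻¹, inv_mem_nhds_one' hV, ?_⟩
  rintro p hp
  refine ⟨1, mem_of_mem_nhds hV, p.1⁻¹ * p.2, ?_, by group⟩
  have h2 : p.2⁻¹ / p.1⁻¹ ∈ V⁻¹ := hp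
  rw [Set.mem_inv] at h2
  have he : (p.2⁻¹ / p.1⁻¹)⁻¹ = p.1⁻¹ * p.2 := by
    simp [div_eq_mul_inv, mul_inv_rev]
  rwa [he] at h2

end RoelckeBasis

section RoelckeBasis2

variable (G : Type*) [Group G] [TopologicalSpace G] [IsTopologicalGroup G]

theorem roelckeFilter_hasBasis :
    (⨅ V ∈ nhds (1 : G), Filter.principal (rent V)).HasBasis
      (fun V : Set G => V ∈ nhds (1 : G)) rent :=
  Filter.hasBasis_biInf_principal
    (fun V hV W hW => ⟨V ∩ W, Filter.inter_mem hV hW,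
      rent_mono Set.inter_subset_left, rent_mono Set.inter_subset_right⟩)
    ⟨Set.univ, Filter.univ_mem⟩

/-- An auxiliary uniform space structure on `G` whose entourages are generated by the
basic Roelcke entourages. -/
noncomputable def roelckeAux : UniformSpace G :=
  UniformSpace.ofCore <| UniformSpace.Core.mk'
    (⨅ V ∈ nhds (1 : G), Filter.principal (rent V))
    (fun r hr x => by
      obtain ⟨V, hV, hsub⟩ := (roelckeFilter_hasBasis G).mem_iff.1 hr
      exact hsub (refl_mem_rent (mem_of_mem_nhds hV) x))
    (fun r hr => by
      obtain ⟨V, hV, hsub⟩ := (roelckeFilter_hasBasis G).mem_iff.1 hr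
      refine (roelckeFilter_hasBasis G).mem_iff.2 ⟨V⁻¹, inv_mem_nhds_one' hV, ?_⟩
      rintro p ⟨v, hv, w, hw, hp⟩
      refine Set.mem_preimage.2 (hsub ?_)
      have hp' : p.2 = v * p.1 * w := hp
      refine ⟨v⁻¹, Set.mem_inv.1 hv, w⁻¹, Set.mem_inv.1 hw, ?_⟩
      show p.1 = v⁻¹ * p.2 * w⁻¹
      rw [hp']; group)
    (fun r hr => by
      obtain ⟨V, hV, hsub⟩ := (roelckeFilter_hasBasis G).mem_iff.1 hr
      obtain ⟨W, hW, hsplit⟩ := exists_nhds_one_split hV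
      exact ⟨rent W, (roelckeFilter_hasBasis G).mem_of_mem hW,
        (rent_comp_subset hsplit).trans hsub⟩)

theorem uniformity_roelckeAux :
    𝓤[roelckeAux G] = ⨅ V ∈ nhds (1 : G), Filter.principal (rent V) := rfl

theorem left_le_roelckeAux : leftUniformity G ≤ roelckeAux G := by
  rw [UniformSpace.le_def, uniformity_roelckeAux]
  intro s hs
  obtain ⟨V, hV, hsub⟩ := (roelckeFilter_hasBasis G).mem_iff.1 hs
  exact Filter.mem_of_superset (rent_mem_left hV) hsub

theorem right_le_roelckeAux : IsTopologicalGroup.rightUniformSpace G ≤ roelckeAux G := by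
  rw [UniformSpace.le_def, uniformity_roelckeAux]
  intro s hs
  obtain ⟨V, hV, hsub⟩ := (roelckeFilter_hasBasis G).mem_iff.1 hs
  exact Filter.mem_of_superset (rent_mem_right hV) hsub

theorem rent_mem_roelcke {V : Set G} (hV : V ∈ nhds (1 : G)) :
    rent V ∈ 𝓤[roelckeUniformity G] := by
  have hle : roelckeUniformity G ≤ roelckeAux G :=
    sup_le (left_le_roelckeAux G) (right_le_roelckeAux G)
  have h1 : rent V ∈ 𝓤[roelckeAux G] := by
    rw [uniformity_roelckeAux]
    exact (roelckeFilter_hasBasis G).mem_of_mem hV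
  exact hle h1

theorem exists_rent_subset {s : Set (G × G)} (hs : s ∈ 𝓤[roelckeUniformity G]) :
    ∃ V ∈ nhds (1 : G), rent V ⊆ s := by
  obtain ⟨t, ht, htsub⟩ := @comp_mem_uniformity_sets G (roelckeUniformity G) s hs
  have hleft : t ∈ 𝓤[leftUniformity G] :=
    (le_sup_left : leftUniformity G ≤ roelckeUniformity G) ht
  have hright : t ∈ 𝓤[IsTopologicalGroup.rightUniformSpace G] :=
    (le_sup_right : IsTopologicalGroup.rightUniformSpace G ≤ roelckeUniformity G) ht
  rw [uniformity_left_eq, Filter.mem_comap] at hleft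
  obtain ⟨V₁, hV₁, hV₁sub⟩ := hleft
  rw [uniformity_right_eq, Filter.mem_comap] at hright
  obtain ⟨V₂, hV₂, hV₂sub⟩ := hright
  refine ⟨V₁⁻¹ ∩ V₂, Filter.inter_mem (inv_mem_nhds_one' hV₁) hV₂, ?_⟩
  rintro p ⟨v, hv, w, hw, hp⟩
  have hp' : p.2 = v * p.1 * w := hp
  refine htsub ⟨p.1 * w, hV₁sub ?_, hV₂sub ?_⟩
  · show (p.1 * w)⁻¹ / p.1⁻¹ ∈ V₁
    have heq : (p.1 * w)⁻¹ / p.1⁻¹ = w⁻¹ := by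
      simp [div_eq_mul_inv, mul_inv_rev, mul_assoc]
    rw [heq]
    exact Set.mem_inv.1 hw.1
  · show p.2 / (p.1 * w) ∈ V₂
    have heq : v * p.1 * w / (p.1 * w) = v := by
      simp [div_eq_mul_inv, mul_inv_rev, ← mul_assoc]
    rw [hp', heq]
    exact hv.2

theorem roelcke_hasBasis :
    𝓤[roelckeUniformity G].HasBasis (fun V : Set G => V ∈ nhds (1 : G)) rent :=
  ⟨fun s => ⟨fun hs => by
      obtain ⟨V, hV, h⟩ := exists_rent_subset G hs
      exact ⟨V, hV, h⟩,
    fun ⟨V, hV, h⟩ => Filter.mem_of_superset (rent_mem_roelcke G hV) h⟩⟩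

end RoelckeBasis2

section RPAlgebra

variable {G : Type*} [Group G] [TopologicalSpace G] [IsTopologicalGroup G]

theorem mem_mul₃ {V T W : Set G} {z : G} :
    z ∈ V * T * W ↔ ∃ v ∈ V, ∃ t ∈ T, ∃ w ∈ W, v * t * w = z := by
  constructor
  · rintro ⟨vt, ⟨v, hv, t, ht, rfl⟩, w, hw, rfl⟩
    exact ⟨v, hv, t, ht, w, hw, rfl⟩
  · rintro ⟨v, hv, t, ht, w, hw, rfl⟩
    exact ⟨v * t, ⟨v, hv, t, ht, rfl⟩, w, hw, rfl⟩

theorem RoelckePrecompact.mono {A B : Set G} (h : A ⊆ B) (hB : RoelckePrecompact B) :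
    RoelckePrecompact A := fun V hV => (hB V hV).imp fun _F hF => h.trans hF

theorem roelckePrecompact_singleton (c : G) : RoelckePrecompact ({c} : Set G) := by
  intro V hV
  refine ⟨{c}, ?_⟩
  intro z hz
  rw [Set.mem_singleton_iff] at hz
  subst hz
  exact mem_mul₃.2 ⟨1, mem_of_mem_nhds hV, z, by simp, 1, mem_of_mem_nhds hV, by simp⟩

theorem RoelckePrecompact.translate {A : Set G} (hA : RoelckePrecompact A) (g h : G) :
    RoelckePrecompact (({g} : Set G) * A * ({h} : Set G)) := by
  classical
  intro V hV
  have hS1 : {x : G | g * x * g⁻¹ ∈ V} ∈ nhds (1 : G) := conj_mem_nhds_one hV g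
  have hS2 : {x : G | h⁻¹ * x * h ∈ V} ∈ nhds (1 : G) := by
    have := conj_mem_nhds_one hV h⁻¹
    simpa using this
  obtain ⟨F, hF⟩ := hA _ (Filter.inter_mem hS1 hS2)
  refine ⟨F.image (fun f => g * f * h), ?_⟩
  intro z hz
  obtain ⟨g', hg', a, ha, h', hh', rfl⟩ := mem_mul₃.1 hz
  rw [Set.mem_singleton_iff] at hg' hh'
  subst hg' hh'
  obtain ⟨s, hs, f, hf, s', hs', rfl⟩ := mem_mul₃.1 (hF ha)
  refine mem_mul₃.2 ⟨g' * s * g'⁻¹, hs.1, g' * f * h', ?_, h'⁻¹ * s' * h', hs'.2, by group⟩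
  exact Finset.mem_coe.2 (Finset.mem_image_of_mem _ hf)

/-- The key lemma: in the presence of a Roelcke-precompact neighborhood of the identity,
the product of two Roelcke-precompact sets is Roelcke precompact. -/
theorem RoelckePrecompact.mul_of_nhds {U A B : Set G} (hU : U ∈ nhds (1 : G))
    (hUrp : RoelckePrecompact U) (hA : RoelckePrecompact A) (hB : RoelckePrecompact B) :
    RoelckePrecompact (A * B) := by
  classical
  intro V hV
  obtain ⟨V₀, hV₀, hV₀mul⟩ := exists_nhds_one_split hV
  obtain ⟨U₁, hU₁, hU₁mul⟩ := exists_nhds_one_split hU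
  have hWnhds : U₁ ∩ V₀ ∈ nhds (1 : G) := Filter.inter_mem hU₁ hV₀
  obtain ⟨FA, hFA⟩ := hA _ hWnhds
  obtain ⟨FB, hFB⟩ := hB _ hWnhds
  have key : ∀ fg : G × G, ∃ E : Finset G,
      ({fg.1} : Set G) * U * ({fg.2} : Set G) ⊆ V₀ * (E : Set G) * V₀ :=
    fun fg => (hUrp.translate fg.1 fg.2) V₀ hV₀
  choose E hE using key
  refine ⟨(FA ×ˢ FB).biUnion E, ?_⟩
  rintro z ⟨a, ha, b, hb, rfl⟩
  obtain ⟨w₁, hw₁, f, hf, w₂, hw₂, rfl⟩ := mem_mul₃.1 (hFA ha)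
  obtain ⟨w₃, hw₃, g, hg, w₄, hw₄, rfl⟩ := mem_mul₃.1 (hFB hb)
  have hmid : f * (w₂ * w₃) * g ∈ ({f} : Set G) * U * ({g} : Set G) :=
    mem_mul₃.2 ⟨f, rfl, w₂ * w₃, hU₁mul _ hw₂.1 _ hw₃.1, g, rfl, rfl⟩
  obtain ⟨v₁, hv₁, e, he, v₂, hv₂, hmideq⟩ := mem_mul₃.1 (hE (f, g) hmid)
  refine mem_mul₃.2 ⟨w₁ * v₁, hV₀mul _ hw₁.2 _ hv₁, e, ?_, v₂ * w₄, hV₀mul _ hv₂ _ hw₄.2, ?_⟩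
  · exact Finset.mem_coe.2 (Finset.mem_biUnion.2 ⟨(f, g),
      Finset.mem_product.2 ⟨Finset.mem_coe.1 hf, Finset.mem_coe.1 hg⟩, Finset.mem_coe.1 he⟩)
  · show w₁ * v₁ * e * (v₂ * w₄) = (w₁ * f * w₂) * (w₃ * g * w₄)
    have hre : (w₁ * f * w₂) * (w₃ * g * w₄) = w₁ * (f * (w₂ * w₃) * g) * w₄ := by group
    rw [hre, ← hmideq]; group

theorem roelckePrecompact_iff_totallyBounded {A : Set G} :
    RoelckePrecompact A ↔ @TotallyBounded G (roelckeUniformity G) A := by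
  classical
  letI : UniformSpace G := roelckeUniformity G
  rw [Filter.HasBasis.totallyBounded_iff (roelcke_hasBasis G)]
  constructor
  · intro h V hV
    obtain ⟨F, hF⟩ := h V⁻¹ (inv_mem_nhds_one' hV)
    refine ⟨(F : Set G), F.finite_toSet, ?_⟩
    intro x hx
    obtain ⟨v, hv, f, hf, w, hw, rfl⟩ := mem_mul₃.1 (hF hx)
    refine Set.mem_iUnion₂.2 ⟨f, hf, ?_⟩
    show (v * f * w, f) ∈ rent V
    refine ⟨v⁻¹, Set.mem_inv.1 hv, w⁻¹, Set.mem_inv.1 hw, ?_⟩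
    show f = v⁻¹ * (v * f * w) * w⁻¹
    group
  · intro h V hV
    obtain ⟨t, htfin, hsub⟩ := h V⁻¹ (inv_mem_nhds_one' hV)
    refine ⟨htfin.toFinset, ?_⟩
    intro x hx
    obtain ⟨y, hy, hxy⟩ := Set.mem_iUnion₂.1 (hsub hx)
    obtain ⟨v, hv, w, hw, hxy'⟩ := hxy
    have hxeq : y = v * x * w := hxy'
    refine mem_mul₃.2 ⟨v⁻¹, Set.mem_inv.1 hv, y, ?_, w⁻¹, Set.mem_inv.1 hw, ?_⟩
    · simpa using hy
    · rw [hxeq]; group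

end RPAlgebra

section RoelckeTopology

variable (G : Type*) [Group G] [TopologicalSpace G] [IsTopologicalGroup G]

theorem roelcke_nhds_eq (x : G) :
    @nhds G (roelckeUniformity G).toTopologicalSpace x = nhds x := by
  have h1 : @nhds G (roelckeUniformity G).toTopologicalSpace x
      = (𝓤[roelckeUniformity G]).comap (Prod.mk x) :=
    @nhds_eq_comap_uniformity G (roelckeUniformity G) x
  rw [h1]
  apply le_antisymm
  ·
    intro s hs
    have hc : Filter.Tendsto (fun p : G × G => p.1 * x * p.2)
        (nhds (1, 1)) (nhds x) := by
      have hcont : Continuous (fun p : G × G => p.1 * x * p.2) := by continuity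
      simpa using hcont.tendsto ((1 : G), (1 : G))
    have hpre : (fun p : G × G => p.1 * x * p.2) ⁻¹' s ∈ nhds ((1 : G), (1 : G)) := hc hs
    rw [nhds_prod_eq, Filter.mem_prod_iff] at hpre
    obtain ⟨V₁, hV₁, V₂, hV₂, hV₁₂⟩ := hpre
    refine Filter.mem_comap.2 ⟨rent (V₁ ∩ V₂), rent_mem_roelcke G (Filter.inter_mem hV₁ hV₂), ?_⟩
    rintro y ⟨v, hv, w, hw, hy⟩
    have hy' : y = v * x * w := hy
    have : (v, w) ∈ V₁ ×ˢ V₂ := ⟨hv.1, hw.2⟩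
    have := hV₁₂ this
    rw [Set.mem_preimage] at this
    rw [hy']
    exact this
  · -- nhds x ≤ comap : every comap-basic set is an (original) neighborhood
    rw [((roelcke_hasBasis G).comap (Prod.mk x)).ge_iff]
    intro V hV
    have hsub : {y : G | y * x⁻¹ ∈ V} ⊆ Prod.mk x ⁻¹' rent V := by
      intro y hy
      exact ⟨y * x⁻¹, hy, 1, mem_of_mem_nhds hV, by group⟩
    refine Filter.mem_of_superset ?_ hsub
    have hc : Filter.Tendsto (fun y : G => y * x⁻¹) (nhds x) (nhds 1) := by
      have hcont : Continuous (fun y : G => y * x⁻¹) := by continuity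
      simpa using hcont.tendsto x
    exact hc hV

theorem roelcke_toTopologicalSpace_eq :
    (roelckeUniformity G).toTopologicalSpace = ‹TopologicalSpace G› :=
  TopologicalSpace.ext_nhds fun x => roelcke_nhds_eq G x

end RoelckeTopology

section MainDirections

variable (G : Type*) [Group G] [TopologicalSpace G] [IsTopologicalGroup G]

theorem locallyRoelckePrecompact_of_locallyCompact
    (h : LocallyCompactSpace (RoelckeCompletion G)) : LocallyRoelckePrecompact G := by
  obtain ⟨K, hK_nhds, -, hK_comp⟩ :=
    h.local_compact_nhds (toRoelckeCompletion G 1) Set.univ Filter.univ_mem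
  have hcont : @Continuous G (RoelckeCompletion G)
      (roelckeUniformity G).toTopologicalSpace _ (toRoelckeCompletion G) :=
    @UniformSpace.Completion.continuous_coe G (roelckeUniformity G)
  refine ⟨toRoelckeCompletion G ⁻¹' interior K, ?_, ?_, ?_⟩
  · have ho : @IsOpen G (roelckeUniformity G).toTopologicalSpace
        (toRoelckeCompletion G ⁻¹' interior K) :=
      @IsOpen.preimage G (RoelckeCompletion G) (roelckeUniformity G).toTopologicalSpace _
        (toRoelckeCompletion G) hcont (interior K) isOpen_interior
    have hiff : @IsOpen G (roelckeUniformity G).toTopologicalSpace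
        (toRoelckeCompletion G ⁻¹' interior K)
        ↔ IsOpen (toRoelckeCompletion G ⁻¹' interior K) := by
      rw [roelcke_toTopologicalSpace_eq G]
    exact hiff.1 ho
  · exact Set.mem_preimage.2 (mem_interior_iff_mem_nhds.2 hK_nhds)
  · letI : UniformSpace G := roelckeUniformity G
    rw [roelckePrecompact_iff_totallyBounded]
    exact TotallyBounded.subset (Set.preimage_mono interior_subset)
      (totallyBounded_preimage
        (@UniformSpace.Completion.isUniformInducing_coe G (roelckeUniformity G))
        hK_comp.totallyBounded)

theorem locallyCompact_of_locallyRoelckePrecompact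
    (h : LocallyRoelckePrecompact G) : LocallyCompactSpace (RoelckeCompletion G) := by
  classical
  obtain ⟨U₀, hU₀open, hU₀mem, hU₀rp⟩ := h
  have hU₀nhds : U₀ ∈ nhds (1 : G) := hU₀open.mem_nhds hU₀mem
  obtain ⟨U₁', hU₁'nhds, hU₁split⟩ := exists_nhds_one_split hU₀nhds
  have hU₁nhds : U₁' ∩ U₀ ∈ nhds (1 : G) := Filter.inter_mem hU₁'nhds hU₀nhds
  have hU₁rp : RoelckePrecompact (U₁' ∩ U₀) :=
    RoelckePrecompact.mono Set.inter_subset_right hU₀rp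
  haveI hcs : CompleteSpace (RoelckeCompletion G) :=
    @UniformSpace.Completion.completeSpace G (roelckeUniformity G)
  have hdense : DenseRange (toRoelckeCompletion G) :=
    @UniformSpace.Completion.denseRange_coe G (roelckeUniformity G)
  have huc : @UniformContinuous G (RoelckeCompletion G) (roelckeUniformity G) _
      (toRoelckeCompletion G) :=
    @UniformSpace.Completion.uniformContinuous_coe G (roelckeUniformity G)
  have hcomap : Filter.comap
        (fun p : G × G => (toRoelckeCompletion G p.1, toRoelckeCompletion G p.2))
        (𝓤 (RoelckeCompletion G)) = 𝓤[roelckeUniformity G] :=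
    @UniformSpace.Completion.comap_coe_eq_uniformity G (roelckeUniformity G)
  constructor
  intro x n hn
  have hrent : rent (U₁' ∩ U₀) ∈ 𝓤[roelckeUniformity G] := rent_mem_roelcke G hU₁nhds
  rw [← hcomap] at hrent
  obtain ⟨D', hD', hD'sub⟩ := Filter.mem_comap.1 hrent
  obtain ⟨En, hEn, hEnsub⟩ := UniformSpace.mem_nhds_iff.1 hn
  obtain ⟨T₂, hT₂, hT₂sub⟩ := comp_mem_uniformity_sets (Filter.inter_mem hD' hEn)
  obtain ⟨T₃, hT₃, hT₃sub⟩ := comp_mem_uniformity_sets hT₂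
  obtain ⟨D, ⟨hDu, hDclosed⟩, hDsub⟩ :=
    uniformity_hasBasis_closed.mem_iff.1 (Filter.inter_mem hT₃ hT₂)
  have hDc : SetRel.symmetrize D ∈ 𝓤 (RoelckeCompletion G) := symmetrize_mem_uniformity hDu
  have hDcsymm : SetRel.IsSymm (SetRel.symmetrize D) := SetRel.isSymm_symmetrize
  have hDcclosed : IsClosed (SetRel.symmetrize D) :=
    IsClosed.inter hDclosed (hDclosed.preimage continuous_swap)
  have hDcT₃ : SetRel.symmetrize D ⊆ T₃ := fun p hp => (hDsub (SetRel.symmetrize_subset_self hp)).1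
  have hDcT₂ : SetRel.symmetrize D ⊆ T₂ := fun p hp => (hDsub (SetRel.symmetrize_subset_self hp)).2
  have hcomp3 : (SetRel.symmetrize D ○ SetRel.symmetrize D) ○ SetRel.symmetrize D ⊆ D' ∩ En :=
    Set.Subset.trans
      (SetRel.comp_subset_comp (Set.Subset.trans (SetRel.comp_subset_comp hDcT₃ hDcT₃) hT₃sub) hDcT₂) hT₂sub
  have hN_nhds : UniformSpace.ball x (SetRel.symmetrize D) ∈ nhds x :=
    UniformSpace.ball_mem_nhds x hDc
  have hDcEn : SetRel.symmetrize D ⊆ En :=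
    Set.Subset.trans hDcT₂ (Set.Subset.trans (subset_comp_self_of_mem_uniformity hT₂)
      (Set.Subset.trans hT₂sub Set.inter_subset_right))
  have hN_sub : UniformSpace.ball x (SetRel.symmetrize D) ⊆ n :=
    Set.Subset.trans (UniformSpace.ball_mono hDcEn x) hEnsub
  have hN_closed : IsClosed (UniformSpace.ball x (SetRel.symmetrize D)) :=
    hDcclosed.preimage (Continuous.prodMk_right x)
  obtain ⟨y₀, hy₀N, g₀, hg₀⟩ :=
    mem_closure_iff_nhds.1 (hdense x) _ hN_nhds
  subst hg₀
  have hxg₀ : (x, toRoelckeCompletion G g₀) ∈ SetRel.symmetrize D := hy₀N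
  have hTsub : {g : G | (toRoelckeCompletion G g₀, toRoelckeCompletion G g)
        ∈ (SetRel.symmetrize D ○ SetRel.symmetrize D) ○ SetRel.symmetrize D}
      ⊆ (U₁' ∩ U₀) * ({g₀} : Set G) * (U₁' ∩ U₀) := by
    intro g hg
    have h2 : (g₀, g) ∈ rent (U₁' ∩ U₀) := hD'sub (Set.mem_preimage.2 (hcomp3 hg).1)
    obtain ⟨v, hv, w, hw, hgeq⟩ := h2
    exact mem_mul₃.2 ⟨v, hv, g₀, rfl, w, hw, hgeq.symm⟩
  have hTrp : RoelckePrecompact {g : G | (toRoelckeCompletion G g₀, toRoelckeCompletion G g)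
        ∈ (SetRel.symmetrize D ○ SetRel.symmetrize D) ○ SetRel.symmetrize D} :=
    RoelckePrecompact.mono hTsub
      (RoelckePrecompact.mul_of_nhds hU₀nhds hU₀rp
        (RoelckePrecompact.mul_of_nhds hU₀nhds hU₀rp hU₁rp (roelckePrecompact_singleton g₀))
        hU₁rp)
  have hT_tb : @TotallyBounded G (roelckeUniformity G)
      {g : G | (toRoelckeCompletion G g₀, toRoelckeCompletion G g)
        ∈ (SetRel.symmetrize D ○ SetRel.symmetrize D) ○ SetRel.symmetrize D} :=
    roelckePrecompact_iff_totallyBounded.1 hTrp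
  have hιT_tb : TotallyBounded (toRoelckeCompletion G ''
      {g : G | (toRoelckeCompletion G g₀, toRoelckeCompletion G g)
        ∈ (SetRel.symmetrize D ○ SetRel.symmetrize D) ○ SetRel.symmetrize D}) :=
    by letI : UniformSpace G := roelckeUniformity G; exact TotallyBounded.image hT_tb huc
  have hNsub_cl : UniformSpace.ball x (SetRel.symmetrize D) ⊆ closure (toRoelckeCompletion G ''
      {g : G | (toRoelckeCompletion G g₀, toRoelckeCompletion G g)
        ∈ (SetRel.symmetrize D ○ SetRel.symmetrize D) ○ SetRel.symmetrize D}) := by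
    intro y hy
    rw [mem_closure_iff_nhds]
    intro t ht
    obtain ⟨E', hE', hE'sub⟩ := UniformSpace.mem_nhds_iff.1 ht
    obtain ⟨z, hzball, g, hg⟩ := mem_closure_iff_nhds.1 (hdense y) _
      (UniformSpace.ball_mem_nhds y (Filter.inter_mem hE' hDc))
    subst hg
    have h4 : (y, toRoelckeCompletion G g) ∈ E' ∩ SetRel.symmetrize D := hzball
    have h2 : (toRoelckeCompletion G g₀, x) ∈ SetRel.symmetrize D := SetRel.symm _ hxg₀
    have h3 : (x, y) ∈ SetRel.symmetrize D := hy
    have hmem : g ∈ {g : G | (toRoelckeCompletion G g₀, toRoelckeCompletion G g)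
        ∈ (SetRel.symmetrize D ○ SetRel.symmetrize D) ○ SetRel.symmetrize D} :=
      ⟨y, ⟨x, h2, h3⟩, h4.2⟩
    exact ⟨toRoelckeCompletion G g, hE'sub h4.1, Set.mem_image_of_mem _ hmem⟩
  have hN_tb : TotallyBounded (UniformSpace.ball x (SetRel.symmetrize D)) :=
    TotallyBounded.subset hNsub_cl (TotallyBounded.closure hιT_tb)
  exact ⟨UniformSpace.ball x (SetRel.symmetrize D), hN_nhds, hN_sub,
    TotallyBounded.isCompact_of_isClosed hN_tb hN_closed⟩

end MainDirections

/-- A Polish group is locally Roelcke precompact if and only if its completion in the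
Roelcke uniformity is locally compact. -/
theorem locallyRoelckePrecompact_iff_roelckeCompletion_locallyCompact
    (G : Type*) [Group G] [TopologicalSpace G] [IsTopologicalGroup G] [PolishSpace G] :
    LocallyRoelckePrecompact G ↔ LocallyCompactSpace (RoelckeCompletion G) := by
  exact ⟨locallyCompact_of_locallyRoelckePrecompact G, locallyRoelckePrecompact_of_locallyCompact G⟩
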